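/- The binary Fibonacci sequence (the iterative fixed point of a → ab, b → a) is not ultimately periodic. -/

import Mathlib

/-- Extension of a substitution `φ : A → B*` to finite words. -/
def wordMap {A B : Type} (φ : A → List B) (w : List A) : List B := w.flatMap φ

/-- `n`-fold iteration of a morphism applied to a word. -/
def iterWord {A : Type} (φ : A → List A) (n : ℕ) (w : List A) : List A :=
  (wordMap φ)^[n] w

/-- A morphism is `k`-uniform if every letter has image of length `k`. -/
def Uniform {A : Type} (k : ℕ) (φ : A → List A) : Prop := ∀ a, (φ a).length = k

/-- The finite word `w` is a prefix of the infinite sequence `s`. -/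
def PrefixSeq {A : Type} (w : List A) (s : ℕ → A) : Prop :=
  ∀ i, i < w.length → w[i]? = some (s i)

/-- `φ` is prolongable on `a₀`: `φ(a₀) = a₀ x` with `x` nonempty and iterates of `x` never empty. -/
def Prolongable {A : Type} (φ : A → List A) (a₀ : A) : Prop :=
  ∃ x : List A, x ≠ [] ∧ φ a₀ = a₀ :: x ∧ ∀ ℓ, iterWord φ ℓ x ≠ []

/-- `s` is the iterative fixed point of `φ` beginning with `a₀`:
`φ` is prolongable on `a₀` and every iterate `φ^n(a₀)` is a prefix of `s`
(their lengths tend to infinity thanks to prolongability, so `s` is determined). -/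
def IsIterFix {A : Type} (φ : A → List A) (a₀ : A) (s : ℕ → A) : Prop :=
  Prolongable φ a₀ ∧ ∀ n, PrefixSeq (iterWord φ n [a₀]) s

/-- `s` is ultimately periodic. -/
def UltimatelyPeriodic {A : Type} (s : ℕ → A) : Prop :=
  ∃ N p : ℕ, 1 ≤ p ∧ ∀ n, N ≤ n → s (n + p) = s n

/-- The extension of `φ` to infinite sequences fixes `s`: for every `m`,
the image of the length-`m` prefix of `s` is again a prefix of `s`. -/
def SeqFixedPoint {A : Type} (φ : A → List A) (s : ℕ → A) : Prop :=
  ∀ m, PrefixSeq (wordMap φ ((List.range m).map s)) s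

/-- The Fibonacci morphism: `a ↦ ab`, `b ↦ a` (with `a := false`, `b := true`). -/
def tau : Bool → List Bool
  | false => [false, true]
  | true => [false]

/- ### auxiliary lemmas -/

lemma aux_count_false_wordMap (w : List Bool) :
    (wordMap tau w).count false = w.length := by
  induction w with
  | nil => simp [wordMap]
  | cons a l ih =>
    cases a <;> simp_all [wordMap, tau, List.count_cons]

lemma aux_length_wordMap (w : List Bool) :
    (wordMap tau w).length = w.length + w.count false := by
  induction w with
  | nil => simp [wordMap]
  | cons a l ih =>
    cases a <;> simp_all [wordMap, tau, List.count_cons] <;> omega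

lemma aux_iter_succ (n : ℕ) (w : List Bool) :
    iterWord tau (n+1) w = wordMap tau (iterWord tau n w) := by
  simp [iterWord, Function.iterate_succ_apply']

lemma aux_fib_word (n : ℕ) :
    (iterWord tau n [false]).length = Nat.fib (n+2) ∧
    (iterWord tau n [false]).count false = Nat.fib (n+1) := by
  induction n with
  | zero => simp [iterWord]
  | succ n ih =>
    obtain ⟨h1, h2⟩ := ih
    rw [aux_iter_succ]
    refine ⟨?_, ?_⟩
    · rw [aux_length_wordMap, h1, h2]
      have h : Nat.fib (n+3) = Nat.fib (n+1) + Nat.fib (n+2) := Nat.fib_add_two (n := n+1)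
      show Nat.fib (n+2) + Nat.fib (n+1) = Nat.fib (n+3)
      omega
    · rw [aux_count_false_wordMap, h1]

lemma aux_le_fib (n : ℕ) : n ≤ Nat.fib (n+2) := by
  induction n with
  | zero => simp
  | succ n ih =>
    have h1 : 1 ≤ Nat.fib (n+1) := Nat.fib_pos.mpr (by omega)
    have h : Nat.fib (n+3) = Nat.fib (n+1) + Nat.fib (n+2) := Nat.fib_add_two (n := n+1)
    show n + 1 ≤ Nat.fib (n+3)
    omega

lemma aux_prefix_eq_map_range {w : List Bool} {s : ℕ → Bool} (h : PrefixSeq w s) :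
    w = (List.range w.length).map s := by
  apply List.ext_getElem?
  intro i
  by_cases hi : i < w.length
  · have := h i hi
    rw [this]
    simp [List.getElem?_map, List.getElem?_range hi]
  · rw [List.getElem?_eq_none (by omega),
      List.getElem?_eq_none (by simp; omega)]

/- growth lemma for Fibonacci-recurrence sequences -/
lemma aux_grow (x : ℕ → ℤ) (hrec : ∀ n, x (n+2) = x (n+1) + x n)
    (n : ℕ) (h1 : 1 ≤ x n) (h2 : 1 ≤ x (n+1)) :
    ∀ k, (Nat.fib (k+1) : ℤ) ≤ x (n + k) := by
  intro k
  induction k using Nat.strong_induction_on with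
  | _ k ih =>
    match k with
    | 0 => simpa using h1
    | 1 => simpa using h2
    | (k+2) =>
      have ha := ih k (by omega)
      have hb := ih (k+1) (by omega)
      have hr := hrec (n + k)
      have e1 : n + (k+2) = n + k + 2 := by ring
      have e2 : n + (k+1) = n + k + 1 := by ring
      rw [e1, hr, ← e2]
      have hf : Nat.fib (k+3) = Nat.fib (k+1) + Nat.fib (k+2) := Nat.fib_add_two (n := k+1)
      show (Nat.fib (k+3) : ℤ) ≤ x (n + (k+1)) + x (n + k)
      have hb' : (Nat.fib (k+2) : ℤ) ≤ x (n + (k+1)) := hb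
      push_cast [hf]
      omega

lemma aux_nopos (x : ℕ → ℤ) (hrec : ∀ n, x (n+2) = x (n+1) + x n)
    (N : ℕ) (M : ℤ) (hbd : ∀ n, N ≤ n → |x n| ≤ M) :
    ∀ n, N ≤ n → ¬(1 ≤ x n ∧ 1 ≤ x (n+1)) := by
  rintro n hn ⟨h1, h2⟩
  set k := M.toNat + 2 with hk
  have hg := aux_grow x hrec n h1 h2 k
  have hfib2 : (Nat.fib (k+1) : ℤ) ≥ (k : ℤ) - 1 := by
    have h := aux_le_fib (k-1)
    have e : k - 1 + 2 = k + 1 := by omega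
    rw [e] at h
    have : (k : ℤ) - 1 ≤ ((k - 1 : ℕ) : ℤ) := by push_cast; omega
    calc (k : ℤ) - 1 ≤ ((k - 1 : ℕ) : ℤ) := this
      _ ≤ (Nat.fib (k+1) : ℤ) := by exact_mod_cast h
  have hb := hbd (n + k) (by omega)
  have hM : 0 ≤ M := le_trans (abs_nonneg _) (hbd n hn)
  have hMt : (M.toNat : ℤ) = M := Int.toNat_of_nonneg hM
  have habs : x (n+k) ≤ M := le_trans (le_abs_self _) hb
  omega

lemma aux_noneg (x : ℕ → ℤ) (hrec : ∀ n, x (n+2) = x (n+1) + x n)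
    (N : ℕ) (M : ℤ) (hbd : ∀ n, N ≤ n → |x n| ≤ M) :
    ∀ n, N ≤ n → ¬(x n ≤ -1 ∧ x (n+1) ≤ -1) := by
  intro n hn h
  refine aux_nopos (fun k => -(x k)) ?_ N M ?_ n hn ⟨?_, ?_⟩
  · intro k
    show -(x (k+2)) = -(x (k+1)) + -(x k)
    rw [hrec k]; ring
  · intro k hk
    show |(-(x k))| ≤ M
    rw [abs_neg]; exact hbd k hk
  · show 1 ≤ -(x n); omega
  · show 1 ≤ -(x (n+1)); omega

lemma aux_eventually_zero (x : ℕ → ℤ) (hrec : ∀ n, x (n+2) = x (n+1) + x n)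
    (N : ℕ) (M : ℤ) (hbd : ∀ n, N ≤ n → |x n| ≤ M) :
    ∃ n, N ≤ n ∧ x n = 0 := by
  have hnopos := aux_nopos x hrec N M hbd
  have hnoneg := aux_noneg x hrec N M hbd
  by_contra hne
  push_neg at hne
  have hdec : ∀ n, N ≤ n → (x (n+2)).natAbs < (x n).natAbs := by
    intro n hn
    have ha := hne n hn
    have hb := hne (n+1) (by omega)
    have hc : x (n+2) ≠ 0 := hne (n+2) (by omega)
    have h1 := hnopos n hn
    have h2 : ¬(1 ≤ x (n+1) ∧ 1 ≤ x (n+2)) := hnopos (n+1) (by omega)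
    have h3 := hnoneg n hn
    have h4 : ¬(x (n+1) ≤ -1 ∧ x (n+2) ≤ -1) := hnoneg (n+1) (by omega)
    have hr := hrec n
    omega
  have hdesc : ∀ k, (x (N + 2*k)).natAbs + k ≤ (x N).natAbs := by
    intro k
    induction k with
    | zero => simp
    | succ k ih =>
      have := hdec (N + 2*k) (by omega)
      have e : N + 2*(k+1) = N + 2*k + 2 := by ring
      rw [e]
      omega
  have := hdesc ((x N).natAbs + 1)
  omega

theorem stmt18 (s : ℕ → Bool) (hs : IsIterFix tau false s) :
    ¬ UltimatelyPeriodic s := by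
  rintro ⟨N, p, hp, hper⟩
  obtain ⟨-, hpre⟩ := hs
  set f : ℕ → ℕ := fun m => ((List.range m).map s).count false with hf
  have hfstep : ∀ m, f (m+1) = f m + (if s m = false then 1 else 0) := by
    intro m
    simp only [hf, List.range_succ, List.map_append, List.count_append]
    cases h : s m <;> simp [h]
  have hfmono : Monotone f := monotone_nat_of_le_succ (fun m => by rw [hfstep]; omega)
  have hfib : ∀ n, f (Nat.fib (n+2)) = Nat.fib (n+1) := by
    intro n
    obtain ⟨h1, h2⟩ := aux_fib_word n
    have h := aux_prefix_eq_map_range (hpre n)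
    rw [h1] at h
    show ((List.range (Nat.fib (n+2))).map s).count false = Nat.fib (n+1)
    rw [← h, h2]
  set c : ℤ := (f (N+p) : ℤ) - f N with hc
  have hcnonneg : 0 ≤ c := by
    have := hfmono (Nat.le_add_right N p)
    simp only [hc]
    omega
  have hdper : ∀ m, N ≤ m → (f (m+p) : ℤ) - f m = c := by
    intro m hm
    induction m, hm using Nat.le_induction with
    | base => simp [hc]
    | succ m hm ih =>
      have e1 := hfstep (m + p)
      have e2 := hfstep m
      have e3 : m + 1 + p = m + p + 1 := by ring
      have e4 : s (m + p) = s m := hper m hm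
      rw [e3, ← ih]
      rw [e4] at e1
      push_cast [e1, e2]
      ring
  set G : ℕ → ℤ := fun m => (p : ℤ) * f m - c * m with hG
  have hGper : ∀ m, N ≤ m → G (m+p) = G m := by
    intro m hm
    have h := hdper m hm
    show (p : ℤ) * f (m+p) - c * (m+p) = (p : ℤ) * f m - c * m
    have : (f (m+p) : ℤ) = f m + c := by omega
    rw [this]
    push_cast
    ring
  set M : ℤ := (((Finset.range p).sup (fun j => (G (N + j)).natAbs) : ℕ) : ℤ) with hM
  have hGbd : ∀ m, N ≤ m → |G m| ≤ M := by
    intro m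
    induction m using Nat.strong_induction_on with
    | _ m ih =>
      intro hm
      by_cases hmp : m < N + p
      · have hj : m - N ∈ Finset.range p := by simp; omega
        have hle : (G (N + (m - N))).natAbs ≤ (Finset.range p).sup (fun j => (G (N + j)).natAbs) :=
          Finset.le_sup (f := fun j => (G (N + j)).natAbs) hj
        have e : N + (m - N) = m := by omega
        rw [e] at hle
        rw [hM, Int.abs_eq_natAbs]
        exact_mod_cast hle
      · have e : m - p + p = m := by omega
        have h := hGper (m - p) (by omega)
        rw [e] at h
        rw [h]
        exact ih (m - p) (by omega) (by omega)
  set x : ℕ → ℤ := fun n => (p : ℤ) * Nat.fib (n+1) - c * Nat.fib (n+2) with hx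
  have hxrec : ∀ n, x (n+2) = x (n+1) + x n := by
    intro n
    show (p : ℤ) * Nat.fib (n+3) - c * Nat.fib (n+4)
        = ((p : ℤ) * Nat.fib (n+2) - c * Nat.fib (n+3)) + ((p : ℤ) * Nat.fib (n+1) - c * Nat.fib (n+2))
    have h1 : Nat.fib (n+3) = Nat.fib (n+1) + Nat.fib (n+2) := Nat.fib_add_two (n := n+1)
    have h2 : Nat.fib (n+4) = Nat.fib (n+2) + Nat.fib (n+3) := Nat.fib_add_two (n := n+2)
    rw [h2, h1]
    push_cast
    ring
  have hxG : ∀ n, x n = G (Nat.fib (n+2)) := by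
    intro n
    show (p : ℤ) * Nat.fib (n+1) - c * Nat.fib (n+2)
        = (p : ℤ) * f (Nat.fib (n+2)) - c * Nat.fib (n+2)
    rw [hfib n]
  have hxbd : ∀ n, N ≤ n → |x n| ≤ M := by
    intro n hn
    rw [hxG]
    exact hGbd _ (le_trans hn (aux_le_fib n))
  obtain ⟨n0, hn0, hx0⟩ := aux_eventually_zero x hxrec N M hxbd
  have hnopos := aux_nopos x hxrec N M hxbd
  have hnoneg := aux_noneg x hxrec N M hxbd
  have hzero : ∀ m, n0 ≤ m → x m = 0 := by
    intro m hm
    induction m, hm using Nat.le_induction with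
    | base => exact hx0
    | succ m hm ih =>
      have hr := hxrec m
      rw [ih] at hr
      have h1 : ¬(1 ≤ x (m+1) ∧ 1 ≤ x (m+2)) := hnopos (m+1) (by omega)
      have h2 : ¬(x (m+1) ≤ -1 ∧ x (m+2) ≤ -1) := hnoneg (m+1) (by omega)
      omega
  set m := n0 + p + 1 with hm
  have hxm := hzero m (by omega)
  have heq : (p : ℤ) * Nat.fib (m+1) = c * Nat.fib (m+2) := by
    have : (p : ℤ) * Nat.fib (m+1) - c * Nat.fib (m+2) = 0 := hxm
    linarith
  set c' : ℕ := c.toNat with hc'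
  have hcc : (c' : ℤ) = c := Int.toNat_of_nonneg hcnonneg
  have heqn : p * Nat.fib (m+1) = c' * Nat.fib (m+2) := by
    have h2 : ((p * Nat.fib (m+1) : ℕ) : ℤ) = ((c' * Nat.fib (m+2) : ℕ) : ℤ) := by
      push_cast
      rw [hcc]
      exact heq
    exact_mod_cast h2
  have hdvd : Nat.fib (m+2) ∣ p * Nat.fib (m+1) := ⟨c', by rw [heqn]; ring⟩
  have hcop : Nat.Coprime (Nat.fib (m+2)) (Nat.fib (m+1)) :=
    (Nat.fib_coprime_fib_succ (m+1)).symm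
  have hdvdp : Nat.fib (m+2) ∣ p := hcop.dvd_of_dvd_mul_right hdvd
  have hle : Nat.fib (m+2) ≤ p := Nat.le_of_dvd (by omega) hdvdp
  have := aux_le_fib m
  omega
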